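/- For every field F there exist 6 pairwise distinct lines in ℙ²(F) having exactly 4 triple points and no point of multiplicity greater than 3. -/

import Mathlib

/-- The projective plane over `F` (also used, by duality, for the lines of that plane). -/
abbrev ProjPlane (F : Type*) [Field F] := Projectivization F (Fin 3 → F)

/-- The point `P` lies on the line `L` (a line is recorded by the projective class of the
coefficient vector of a defining linear form): the pairing of representatives vanishes.
This does not depend on the choice of representatives. -/
def OnLine {F : Type*} [Field F] (P L : ProjPlane F) : Prop :=
  dotProduct P.rep L.rep = 0

/-- The multiplicity of a point `P` with respect to a configuration `lines`:
the number of lines of the configuration passing through `P`. -/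
noncomputable def mult {F : Type*} [Field F] (lines : Set (ProjPlane F))
    (P : ProjPlane F) : ℕ :=
  {L ∈ lines | OnLine P L}.ncard

namespace SixLines
open Projectivization
variable {F : Type*} [Field F]

lemma onLine_mk (P : ProjPlane F) (w : Fin 3 → F) (hw : w ≠ 0) :
    OnLine P (Projectivization.mk F w hw) ↔ dotProduct P.rep w = 0 := by
  obtain ⟨a, ha⟩ := Projectivization.exists_smul_eq_mk_rep F w hw
  unfold OnLine
  rw [← ha, Units.smul_def, dotProduct_smul, smul_eq_mul, mul_eq_zero]
  simp [a.ne_zero]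

lemma mk_ne_mk {v w : Fin 3 → F} (hv : v ≠ 0) (hw : w ≠ 0) (i : Fin 3)
    (h1 : v i = 0) (h2 : w i ≠ 0) :
    Projectivization.mk F v hv ≠ Projectivization.mk F w hw := by
  intro h
  obtain ⟨a, ha⟩ := (Projectivization.mk_eq_mk_iff F v w hv hw).mp h
  have := congrFun ha i
  simp [h1, Units.smul_def, h2, a.ne_zero] at this

def V : Fin 6 → Fin 3 → F :=
  ![![0,0,1], ![0,1,0], ![1,0,0], ![0,1,-1], ![1,0,-1], ![1,-1,0]]

@[simp] lemma V0 : (V 0 : Fin 3 → F) = ![0,0,1] := rfl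
@[simp] lemma V1 : (V 1 : Fin 3 → F) = ![0,1,0] := rfl
@[simp] lemma V2 : (V 2 : Fin 3 → F) = ![1,0,0] := rfl
@[simp] lemma V3 : (V 3 : Fin 3 → F) = ![0,1,-1] := rfl
@[simp] lemma V4 : (V 4 : Fin 3 → F) = ![1,0,-1] := rfl
@[simp] lemma V5 : (V 5 : Fin 3 → F) = ![1,-1,0] := rfl

lemma V_ne_zero (i : Fin 6) : (V i : Fin 3 → F) ≠ 0 := by
  fin_cases i <;> intro h <;>
    first
      | simpa using congrFun h 0
      | simpa using congrFun h 1
      | simpa using congrFun h 2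

noncomputable def line (i : Fin 6) : ProjPlane F :=
  Projectivization.mk F (V i) (V_ne_zero i)

lemma line_inj : Function.Injective (line (F := F)) := by
  intro i j h
  fin_cases i <;> fin_cases j <;>
    first
      | rfl
      | (refine absurd h (mk_ne_mk _ _ 0 ?_ ?_) <;> norm_num [V] <;> done)
      | (refine absurd h (mk_ne_mk _ _ 1 ?_ ?_) <;> norm_num [V] <;> done)
      | (refine absurd h (mk_ne_mk _ _ 2 ?_ ?_) <;> simp [V] <;> done)
      | (refine absurd h.symm (mk_ne_mk _ _ 0 ?_ ?_) <;> norm_num [V] <;> done)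
      | (refine absurd h.symm (mk_ne_mk _ _ 1 ?_ ?_) <;> norm_num [V] <;> done)
      | (refine absurd h.symm (mk_ne_mk _ _ 2 ?_ ?_) <;> simp [V] <;> done)

open scoped Classical in
noncomputable def cnt (p : Fin 3 → F) : ℕ :=
  (if p 2 = 0 then 1 else 0) + (if p 1 = 0 then 1 else 0) + (if p 0 = 0 then 1 else 0)
  + (if p 1 = p 2 then 1 else 0) + (if p 0 = p 2 then 1 else 0) + (if p 0 = p 1 then 1 else 0)

def linesSet : Set (ProjPlane F) := Set.range (line (F := F))

lemma linesSet_ncard : (linesSet (F := F)).ncard = 6 := by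
  rw [linesSet, ← Set.image_univ, Set.ncard_image_of_injective _ line_inj, Set.ncard_univ]
  simp

lemma mult_eq (P : ProjPlane F) : mult (linesSet (F := F)) P = cnt P.rep := by
  classical
  unfold mult linesSet
  have h1 : {L ∈ Set.range (line (F := F)) | OnLine P L}
      = line '' {i : Fin 6 | OnLine P (line i)} := by
    ext L
    constructor
    · rintro ⟨⟨i, rfl⟩, hL⟩; exact ⟨i, hL, rfl⟩
    · rintro ⟨i, hi, rfl⟩; exact ⟨⟨i, rfl⟩, hi⟩
  have h2 : {i : Fin 6 | OnLine P (line i)}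
      = ↑(Finset.univ.filter (fun i : Fin 6 => OnLine P (line i))) := by
    ext i; simp
  rw [h1, Set.ncard_image_of_injective _ line_inj, h2, Set.ncard_coe_finset,
    Finset.card_filter, Fin.sum_univ_six]
  have e0 : (OnLine P (line 0)) ↔ P.rep 2 = 0 := by
    rw [line, onLine_mk]; simp [dotProduct, Fin.sum_univ_three]
  have e1 : (OnLine P (line 1)) ↔ P.rep 1 = 0 := by
    rw [line, onLine_mk]; simp [dotProduct, Fin.sum_univ_three]
  have e2 : (OnLine P (line 2)) ↔ P.rep 0 = 0 := by
    rw [line, onLine_mk]; simp [dotProduct, Fin.sum_univ_three]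
  have e3 : (OnLine P (line 3)) ↔ P.rep 1 = P.rep 2 := by
    rw [line, onLine_mk]; simp [dotProduct, Fin.sum_univ_three, sub_eq_zero,
      ← sub_eq_add_neg]
  have e4 : (OnLine P (line 4)) ↔ P.rep 0 = P.rep 2 := by
    rw [line, onLine_mk]; simp [dotProduct, Fin.sum_univ_three, sub_eq_zero,
      ← sub_eq_add_neg]
  have e5 : (OnLine P (line 5)) ↔ P.rep 0 = P.rep 1 := by
    rw [line, onLine_mk]; simp [dotProduct, Fin.sum_univ_three, sub_eq_zero,
      ← sub_eq_add_neg]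
  rw [cnt]
  simp only [e0, e1, e2, e3, e4, e5]

def W : Fin 4 → Fin 3 → F := ![![1,0,0], ![0,1,0], ![0,0,1], ![1,1,1]]

@[simp] lemma W0 : (W 0 : Fin 3 → F) = ![1,0,0] := rfl
@[simp] lemma W1 : (W 1 : Fin 3 → F) = ![0,1,0] := rfl
@[simp] lemma W2 : (W 2 : Fin 3 → F) = ![0,0,1] := rfl
@[simp] lemma W3 : (W 3 : Fin 3 → F) = ![1,1,1] := rfl

lemma W_ne_zero (i : Fin 4) : (W i : Fin 3 → F) ≠ 0 := by
  fin_cases i <;> intro h <;>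
    first
      | simpa using congrFun h 0
      | simpa using congrFun h 1
      | simpa using congrFun h 2

noncomputable def pt (i : Fin 4) : ProjPlane F :=
  Projectivization.mk F (W i) (W_ne_zero i)

lemma pt_inj : Function.Injective (pt (F := F)) := by
  intro i j h
  fin_cases i <;> fin_cases j <;>
    first
      | rfl
      | (refine absurd h (mk_ne_mk _ _ 0 ?_ ?_) <;> norm_num [W] <;> done)
      | (refine absurd h (mk_ne_mk _ _ 1 ?_ ?_) <;> norm_num [W] <;> done)
      | (refine absurd h (mk_ne_mk _ _ 2 ?_ ?_) <;> norm_num [W] <;> done)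
      | (refine absurd h.symm (mk_ne_mk _ _ 0 ?_ ?_) <;> norm_num [W] <;> done)
      | (refine absurd h.symm (mk_ne_mk _ _ 1 ?_ ?_) <;> norm_num [W] <;> done)
      | (refine absurd h.symm (mk_ne_mk _ _ 2 ?_ ?_) <;> norm_num [W] <;> done)


def bcount (b : Fin 6 → Bool) : ℕ :=
  (if b 0 then 1 else 0) + (if b 1 then 1 else 0) + (if b 2 then 1 else 0)
  + (if b 3 then 1 else 0) + (if b 4 then 1 else 0) + (if b 5 then 1 else 0)

set_option synthInstance.maxSize 2000 in
set_option maxHeartbeats 1000000 in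
lemma key : ∀ b : Fin 6 → Bool,
  (¬(b 0 ∧ b 1 ∧ b 2)) →
  (b 0 → b 1 → b 3) → (b 0 → b 3 → b 1) → (b 1 → b 3 → b 0) →
  (b 0 → b 2 → b 4) → (b 0 → b 4 → b 2) → (b 2 → b 4 → b 0) →
  (b 1 → b 2 → b 5) → (b 1 → b 5 → b 2) → (b 2 → b 5 → b 1) →
  (b 3 → b 4 → b 5) → (b 3 → b 5 → b 4) → (b 4 → b 5 → b 3) →
  bcount b ≤ 3 ∧ (bcount b = 3 →
    ((b 0 ∧ b 1 ∧ b 3 ∧ ¬b 2 ∧ ¬b 4 ∧ ¬b 5) ∨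
     (b 0 ∧ b 2 ∧ b 4 ∧ ¬b 1 ∧ ¬b 3 ∧ ¬b 5) ∨
     (b 1 ∧ b 2 ∧ b 5 ∧ ¬b 0 ∧ ¬b 3 ∧ ¬b 4) ∨
     (b 3 ∧ b 4 ∧ b 5 ∧ ¬b 0 ∧ ¬b 1 ∧ ¬b 2))) := by decide

open scoped Classical in
noncomputable def bvec (p : Fin 3 → F) : Fin 6 → Bool :=
  ![decide (p 2 = 0), decide (p 1 = 0), decide (p 0 = 0),
    decide (p 1 = p 2), decide (p 0 = p 2), decide (p 0 = p 1)]

open scoped Classical in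
@[simp] lemma bvec0 (p : Fin 3 → F) : bvec p 0 = decide (p 2 = 0) := rfl
open scoped Classical in
@[simp] lemma bvec1 (p : Fin 3 → F) : bvec p 1 = decide (p 1 = 0) := rfl
open scoped Classical in
@[simp] lemma bvec2 (p : Fin 3 → F) : bvec p 2 = decide (p 0 = 0) := rfl
open scoped Classical in
@[simp] lemma bvec3 (p : Fin 3 → F) : bvec p 3 = decide (p 1 = p 2) := rfl
open scoped Classical in
@[simp] lemma bvec4 (p : Fin 3 → F) : bvec p 4 = decide (p 0 = p 2) := rfl
open scoped Classical in
@[simp] lemma bvec5 (p : Fin 3 → F) : bvec p 5 = decide (p 0 = p 1) := rfl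

lemma cnt_eq_bcount (p : Fin 3 → F) : cnt p = bcount (bvec p) := by
  classical
  unfold cnt bcount
  simp only [bvec0, bvec1, bvec2, bvec3, bvec4, bvec5, decide_eq_true_eq]

lemma cnt_facts (p : Fin 3 → F) (hp : p ≠ 0) :
    bcount (bvec p) ≤ 3 ∧ (bcount (bvec p) = 3 →
    ((bvec p 0 ∧ bvec p 1 ∧ bvec p 3 ∧ ¬bvec p 2 ∧ ¬bvec p 4 ∧ ¬bvec p 5) ∨
     (bvec p 0 ∧ bvec p 2 ∧ bvec p 4 ∧ ¬bvec p 1 ∧ ¬bvec p 3 ∧ ¬bvec p 5) ∨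
     (bvec p 1 ∧ bvec p 2 ∧ bvec p 5 ∧ ¬bvec p 0 ∧ ¬bvec p 3 ∧ ¬bvec p 4) ∨
     (bvec p 3 ∧ bvec p 4 ∧ bvec p 5 ∧ ¬bvec p 0 ∧ ¬bvec p 1 ∧ ¬bvec p 2))) := by
  classical
  have hne : ¬(p 0 = 0 ∧ p 1 = 0 ∧ p 2 = 0) := by
    rintro ⟨a, b, c⟩
    exact hp (funext fun i => by fin_cases i <;> assumption)
  apply key <;>
    simp only [bvec0, bvec1, bvec2, bvec3, bvec4, bvec5, decide_eq_true_eq] <;>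
    first
      | grind
      | (rintro ⟨a, b, c⟩; exact hne ⟨c, b, a⟩)

lemma triple_set :
    {P : ProjPlane F | mult (linesSet (F := F)) P = 3} = Set.range (pt (F := F)) := by
  classical
  ext P
  simp only [Set.mem_setOf_eq, Set.mem_range, mult_eq, cnt_eq_bcount]
  constructor
  · intro h
    have h4 := (cnt_facts P.rep P.rep_nonzero).2 h
    simp only [bvec0, bvec1, bvec2, bvec3, bvec4, bvec5, decide_eq_true_eq] at h4
    rcases h4 with ⟨h0, h1, h3, h2, _, _⟩ | ⟨h0, h2, h4, h1, _, _⟩ |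
      ⟨h1, h2, h5, h0, _, _⟩ | ⟨h3, h4, h5, h0, _, _⟩
    · refine ⟨0, ?_⟩
      refine (Eq.symm ?_)
      conv_lhs => rw [← P.mk_rep]
      rw [pt, Projectivization.mk_eq_mk_iff]
      exact ⟨Units.mk0 (P.rep 0) h2, by
        funext i; fin_cases i <;> simp [Units.smul_def, h0, h1]⟩
    · refine ⟨1, ?_⟩
      refine (Eq.symm ?_)
      conv_lhs => rw [← P.mk_rep]
      rw [pt, Projectivization.mk_eq_mk_iff]
      exact ⟨Units.mk0 (P.rep 1) h1, by
        funext i; fin_cases i <;> simp [Units.smul_def, h0, h2]⟩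
    · refine ⟨2, ?_⟩
      refine (Eq.symm ?_)
      conv_lhs => rw [← P.mk_rep]
      rw [pt, Projectivization.mk_eq_mk_iff]
      exact ⟨Units.mk0 (P.rep 2) h0, by
        funext i; fin_cases i <;> simp [Units.smul_def, h1, h2]⟩
    · refine ⟨3, ?_⟩
      refine (Eq.symm ?_)
      conv_lhs => rw [← P.mk_rep]
      rw [pt, Projectivization.mk_eq_mk_iff]
      exact ⟨Units.mk0 (P.rep 2) h0, by
        funext i; fin_cases i <;> simp [Units.smul_def, ← h3, ← h5]⟩
  · rintro ⟨i, rfl⟩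
    rw [← cnt_eq_bcount, pt]
    obtain ⟨a, ha⟩ := Projectivization.exists_smul_eq_mk_rep (K := F) (V := Fin 3 → F) (W i) (by exact W_ne_zero i)
    rw [← ha]
    fin_cases i <;>
      simp [cnt, Units.smul_def, a.ne_zero, Ne.symm a.ne_zero, mul_comm]

end SixLines

/-- Over every field there is a configuration of `6` pairwise distinct lines in `ℙ²(F)` with
exactly `4` triple points and no point of multiplicity greater than `3`. -/
theorem six_lines_four_triple_points (F : Type*) [Field F] :
    ∃ lines : Set (ProjPlane F),
      lines.ncard = 6 ∧
      {P : ProjPlane F | mult lines P = 3}.ncard = 4 ∧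
      ∀ P : ProjPlane F, mult lines P ≤ 3 := by
  classical
  refine ⟨SixLines.linesSet, SixLines.linesSet_ncard, ?_, fun P => ?_⟩
  · rw [SixLines.triple_set, ← Set.image_univ,
      Set.ncard_image_of_injective _ SixLines.pt_inj, Set.ncard_univ]
    simp
  · rw [SixLines.mult_eq, SixLines.cnt_eq_bcount]
    exact (SixLines.cnt_facts _ P.rep_nonzero).1
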